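/- Every Lusin π-base for a topological space (X,τ) is an α-scheme for (X,τ). -/

import Mathlib

open Set Topology

universe u v

/-- The restriction `p↾n` of `p : ℕ → ℕ`, as a finite sequence in `ω^{<ω}`. -/
def pre (p : ℕ → ℕ) (n : ℕ) : List ℕ := List.ofFn fun i : Fin n => p i

/-- `a ⊑ p` : the finite sequence `a` is an initial segment of the branch `p`. -/
def IsPre (a : List ℕ) (p : ℕ → ℕ) : Prop := a = pre p a.length

/-- `S_a = {p ∈ ω^ω : a ⊑ p}`, the pieces of the standard Lusin scheme. -/
def stdS (a : List ℕ) : Set (ℕ → ℕ) := {p | IsPre a p}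

section scheme

variable {X Y : Type*}

/-- `fruit_p(V) = ⋂_n V_{p↾n}`. -/
def fruit (V : List ℕ → Set X) (p : ℕ → ℕ) : Set X := ⋂ n, V (pre p n)

/-- `flesh(V) = ⋃_a V_a`. -/
def flesh (V : List ℕ → Set X) : Set X := ⋃ a, V a

/-- The Souslin scheme `V` covers the set `A`. -/
def Covers (V : List ℕ → Set X) (A : Set X) : Prop :=
  V [] = A ∧ ∀ a, V a = ⋃ n, V (a ++ [n])

/-- The Souslin scheme `V` partitions the set `A`. -/
def Partitions (V : List ℕ → Set X) (A : Set X) : Prop :=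
  Covers V A ∧ ∀ a, ∀ n m : ℕ, n ≠ m → V (a ++ [n]) ∩ V (a ++ [m]) = ∅

/-- `V` is complete: every fruit is nonempty. -/
def CompleteScheme (V : List ℕ → Set X) : Prop := ∀ q : ℕ → ℕ, (fruit V q).Nonempty

/-- `V` has strict branches: every fruit is a singleton. -/
def StrictBranches (V : List ℕ → Set X) : Prop := ∀ q : ℕ → ℕ, ∃ x, fruit V q = {x}

/-- `V` is regular: `V_{a⌢n} ⊆ V_a`. -/
def RegularScheme (V : List ℕ → Set X) : Prop := ∀ a n, V (a ++ [n]) ⊆ V a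

/-- `V` has nonempty leaves. -/
def NonemptyLeaves (V : List ℕ → Set X) : Prop := ∀ a, (V a).Nonempty

/-- `V` is an open Souslin scheme with respect to the topology `t`. -/
def OpenScheme (t : TopologicalSpace X) (V : List ℕ → Set X) : Prop := ∀ a, t.IsOpen (V a)

/-- `V` is semi-open with respect to the topology `t`: `V_a ⊆ Cl_t(Int_t(V_a))`. -/
def SemiOpenScheme (t : TopologicalSpace X) (V : List ℕ → Set X) : Prop :=
  ∀ a, V a ⊆ @closure _ t (@interior _ t (V a))

/-- `Ṽ^k_b = ⋃_{j ≥ k} V_{b⌢j}`. -/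
def shootSet (V : List ℕ → Set X) (b : List ℕ) (k : ℕ) : Set X :=
  ⋃ j, ⋃ (_ : k ≤ j), V (b ++ [j])

/-- `shoot_b(V) = {Ṽ^k_b : k ∈ ω}`. -/
def shoot (V : List ℕ → Set X) (b : List ℕ) : Set (Set X) := {G | ∃ k, G = shootSet V b k}

/-- `γ → U`: some member of the family `γ` is contained in `U`. -/
def Engulfs (γ : Set (Set X)) (U : Set X) : Prop := ∃ G ∈ γ, G ⊆ U

/-- `p →_V U`: there is an infinite `L ⊆ ω` with `shoot_{p↾n}(V) → U` for all `n ∈ L`. -/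
def ArrowSeq (V : List ℕ → Set X) (p : ℕ → ℕ) (U : Set X) : Prop :=
  ∃ L : Set ℕ, L.Infinite ∧ ∀ n ∈ L, Engulfs (shoot V (pre p n)) U

/-- `p →_{V,t} x`: `p →_V U` for every `t`-open `U` containing `x`. -/
def ArrowPt (t : TopologicalSpace X) (V : List ℕ → Set X) (p : ℕ → ℕ) (x : X) : Prop :=
  ∀ U : Set X, t.IsOpen U → x ∈ U → ArrowSeq V p U

/-- `V` is a Lusin π-base for `(X, t)`. -/
def LusinPiBase (t : TopologicalSpace X) (V : List ℕ → Set X) : Prop :=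
  OpenScheme t V ∧ Partitions V Set.univ ∧ StrictBranches V ∧
    ∀ x : X, ∀ U : Set X, t.IsOpen U → x ∈ U →
      ∃ a : List ℕ, ∃ n : ℕ, x ∈ V a ∧ shootSet V a n ⊆ U

/-- `V` is an α-scheme for `(X, t)`. -/
def AlphaScheme (t : TopologicalSpace X) (V : List ℕ → Set X) : Prop :=
  OpenScheme t V ∧ CompleteScheme V ∧ Covers V Set.univ ∧
    (∀ a : List ℕ, ∀ x ∈ V a, ∃ p : ℕ → ℕ, IsPre a p ∧ x ∈ fruit V p ∧ ArrowPt t V p x) ∧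
    (∀ p : ℕ → ℕ, ∃ x ∈ fruit V p, ArrowPt t V p x)

/-- `V` is a ramose α-scheme for `(X, t)`. -/
def RamoseAlphaScheme (t : TopologicalSpace X) (V : List ℕ → Set X) : Prop :=
  AlphaScheme t V ∧ ∀ a : List ℕ, ∀ x ∈ V a,
    Cardinal.mk {p : ℕ → ℕ // IsPre a p ∧ x ∈ fruit V p ∧ ArrowPt t V p x} = Cardinal.continuum

/-- `γ` is a π-base for `(X, t)`. -/
def PiBase (t : TopologicalSpace X) (γ : Set (Set X)) : Prop :=
  (∀ G ∈ γ, G.Nonempty ∧ t.IsOpen G) ∧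
    ∀ U : Set X, t.IsOpen U → U.Nonempty → ∃ G ∈ γ, G ⊆ U

/-- `γ` is a π-net for the subspace `A` of `(X, t)`. -/
def PiNetFor (t : TopologicalSpace X) (γ : Set (Set X)) (A : Set X) : Prop :=
  (∀ G ∈ γ, G.Nonempty) ∧
    ∀ U : Set X, t.IsOpen U → (U ∩ A).Nonempty → ∃ G ∈ γ, G ⊆ U ∩ A

/-- `V` is a π-base Souslin scheme on `(X, t)`:
an open scheme such that `{V_b : a ⊑ b}` is a π-net for the subspace `V_a`, for each `a`. -/
def PiBaseScheme (t : TopologicalSpace X) (V : List ℕ → Set X) : Prop :=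
  OpenScheme t V ∧ ∀ a, PiNetFor t {S | ∃ b, a <+: b ∧ S = V b} (V a)

/-- `(X, t)` is a π-space. -/
def PiSpace (t : TopologicalSpace X) : Prop :=
  ∃ V : List ℕ → Set X, OpenScheme t V ∧ Partitions V Set.univ ∧ StrictBranches V ∧
    PiBase t {S | ∃ a, S = V a}

/-- `(X, t)` is zero-dimensional: it has a base consisting of clopen sets. -/
def ZeroDimT (t : TopologicalSpace X) : Prop :=
  ∀ U : Set X, t.IsOpen U → ∀ x ∈ U, ∃ C : Set X, t.IsOpen C ∧ @IsClosed _ t C ∧ x ∈ C ∧ C ⊆ U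

/-- `branches_V(x) = {q ∈ ω^ω : x ∈ fruit_q(V)}`. -/
def branches (V : List ℕ → Set X) (x : X) : Set (ℕ → ℕ) := {q | x ∈ fruit V q}

/-- `f` is a selector on `V`: a surjection of `ω^ω` onto `flesh(V)` such that each fiber
`f⁻¹(x)` is a dense subset of the subspace `branches_V(x)` of the Baire space. -/
def IsSelector (V : List ℕ → Set X) (f : (ℕ → ℕ) → X) : Prop :=
  (∀ p, f p ∈ flesh V) ∧ (∀ x ∈ flesh V, ∃ p, f p = x) ∧
    ∀ x ∈ flesh V, f ⁻¹' {x} ⊆ branches V x ∧ branches V x ⊆ closure (f ⁻¹' {x})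

/-- The topology `σ_{t,f}` on `ω^ω` generated by the subbase
`{f⁻¹[U] : U ∈ t} ∪ {S_a : a ∈ ω^{<ω}}`. -/
def sigmaTop (t : TopologicalSpace X) (f : (ℕ → ℕ) → X) : TopologicalSpace (ℕ → ℕ) :=
  TopologicalSpace.generateFrom
    ({S | ∃ U : Set X, t.IsOpen U ∧ S = f ⁻¹' U} ∪ {S | ∃ a : List ℕ, S = stdS a})

end scheme

/-- `(ω^ω, t)` is a standard π-space: the family `τ_N \ {∅}` of nonempty open sets of the
Baire space is a π-base for `(ω^ω, t)`. -/
def StandardPiSpace (t : TopologicalSpace (ℕ → ℕ)) : Prop :=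
  (∀ U : Set (ℕ → ℕ), IsOpen U → U.Nonempty → t.IsOpen U) ∧
    ∀ U : Set (ℕ → ℕ), t.IsOpen U → U.Nonempty → ∃ G : Set (ℕ → ℕ), IsOpen G ∧ G.Nonempty ∧ G ⊆ U

section aux

variable {X : Type*}

lemma length_pre' (p : ℕ → ℕ) (n : ℕ) : (pre p n).length = n := by simp [pre]

lemma pre_succ' (p : ℕ → ℕ) (n : ℕ) : pre p (n+1) = pre p n ++ [p n] := by
  rw [pre, List.ofFn_succ', List.concat_eq_append]
  rfl

lemma pre_prefix' (p : ℕ → ℕ) {m n : ℕ} (h : m ≤ n) : pre p m <+: pre p n := by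
  induction n with
  | zero => interval_cases m; exact List.prefix_refl _
  | succ k ih =>
    rcases Nat.lt_succ_iff_lt_or_eq.mp (Nat.lt_succ_of_le h) with h' | h'
    · exact (ih (Nat.lt_succ_iff.mp h')).trans (by rw [pre_succ']; exact ⟨[p k], rfl⟩)
    · rw [h']

lemma regular_of_covers' {V : List ℕ → Set X} {A : Set X} (h : Covers V A) :
    RegularScheme V := by
  intro a n
  rw [h.2 a]
  exact Set.subset_iUnion (fun k => V (a ++ [k])) n

lemma mono_of_covers' {V : List ℕ → Set X} {A : Set X} (h : Covers V A) {b c : List ℕ}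
    (hbc : b <+: c) : V c ⊆ V b := by
  obtain ⟨t, rfl⟩ := hbc
  induction t using List.reverseRecOn with
  | nil => simp
  | append_singleton t n ih =>
    have h1 : V (b ++ (t ++ [n])) ⊆ V (b ++ t) := by
      rw [← List.append_assoc]
      exact regular_of_covers' h _ _
    exact h1.trans ih

lemma eq_of_nonempty_inter' {V : List ℕ → Set X} (h : Partitions V Set.univ) :
    ∀ n (b c : List ℕ), b.length = n → c.length = n → (V b ∩ V c).Nonempty → b = c := by
  intro n
  induction n with
  | zero =>
    intro b c hb hc _
    rw [List.length_eq_zero_iff] at hb hc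
    rw [hb, hc]
  | succ k ih =>
    intro b c hb hc hne
    have hbne : b ≠ [] := by intro hh; simp [hh] at hb
    have hcne : c ≠ [] := by intro hh; simp [hh] at hc
    obtain ⟨b', i, rfl⟩ : ∃ b' i, b = b' ++ [i] :=
      ⟨b.dropLast, b.getLast hbne, (List.dropLast_append_getLast hbne).symm⟩
    obtain ⟨c', j, rfl⟩ : ∃ c' j, c = c' ++ [j] :=
      ⟨c.dropLast, c.getLast hcne, (List.dropLast_append_getLast hcne).symm⟩
    have hb' : b'.length = k := by simpa using hb
    have hc' : c'.length = k := by simpa using hc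
    have hsub : V (b' ++ [i]) ∩ V (c' ++ [j]) ⊆ V b' ∩ V c' :=
      Set.inter_subset_inter (regular_of_covers' h.1 _ _) (regular_of_covers' h.1 _ _)
    have hbc : b' = c' := ih b' c' hb' hc' (hne.mono hsub)
    subst hbc
    have hij : i = j := by
      by_contra hij
      rw [h.2 b' i j hij] at hne
      exact Set.not_nonempty_empty hne
    rw [hij]

lemma nonempty_of_strict' {V : List ℕ → Set X} (hstrict : StrictBranches V) (a : List ℕ) :
    (V a).Nonempty := by
  set q : ℕ → ℕ := fun i => a.getD i 0 with hq
  obtain ⟨x, hx⟩ := hstrict q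
  have hpre : pre q a.length = a := by
    apply List.ext_getElem (by simp [pre])
    intro i h1 h2
    simp [pre, q, List.getD_eq_getElem]
  refine ⟨x, ?_⟩
  have h1 : x ∈ fruit V q := by rw [hx]; exact rfl
  have h2 := Set.mem_iInter.mp h1 a.length
  rwa [hpre] at h2

lemma arrowPt_of_fruit' {tX : TopologicalSpace X} {V : List ℕ → Set X}
    (hV : LusinPiBase tX V) {p : ℕ → ℕ} {x : X} (hx : x ∈ fruit V p) :
    ArrowPt tX V p x := by
  obtain ⟨hopen, hpart, hstrict, hL6⟩ := hV
  intro U hU hxU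
  refine ⟨{n | Engulfs (shoot V (pre p n)) U}, ?_, fun n hn => hn⟩
  apply Set.infinite_of_not_bddAbove
  rintro ⟨m, hm⟩
  have hxm : x ∈ V (pre p (m+1)) := Set.mem_iInter.mp hx (m+1)
  have hUopen : tX.IsOpen (U ∩ V (pre p (m+1))) := tX.isOpen_inter _ _ hU (hopen _)
  obtain ⟨b, k, hxb, hsh⟩ := hL6 x _ hUopen ⟨hxU, hxm⟩
  have hb : b = pre p b.length :=
    eq_of_nonempty_inter' hpart b.length b (pre p b.length) rfl (length_pre' p _)
      ⟨x, hxb, Set.mem_iInter.mp hx _⟩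
  have hge : m + 1 ≤ b.length := by
    by_contra hlt
    push_neg at hlt
    set j := max k (p b.length + 1) with hj
    obtain ⟨y, hy⟩ := nonempty_of_strict' hstrict (b ++ [j])
    have hysh : y ∈ shootSet V b k :=
      Set.mem_iUnion.mpr ⟨j, Set.mem_iUnion.mpr ⟨le_max_left _ _, hy⟩⟩
    have hy2 : y ∈ V (pre p (m+1)) := (hsh hysh).2
    have hy3 : y ∈ V (pre p (b.length + 1)) :=
      mono_of_covers' hpart.1 (pre_prefix' p hlt) hy2
    rw [pre_succ', ← hb] at hy3
    have hjk : p b.length + 1 ≤ j := le_max_right _ _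
    have hj2 : j ≠ p b.length := by omega
    exact Set.eq_empty_iff_forall_notMem.mp (hpart.2 b j (p b.length) hj2) y ⟨hy, hy3⟩
  have hmem : b.length ∈ {n | Engulfs (shoot V (pre p n)) U} := by
    refine ⟨shootSet V b k, ⟨k, ?_⟩, fun y hy => (hsh hy).1⟩
    rw [← hb]
  have := hm hmem
  omega

lemma exists_branch' {V : List ℕ → Set X} (hpart : Partitions V Set.univ)
    (a : List ℕ) (x : X) (hx : x ∈ V a) :
    ∃ p : ℕ → ℕ, IsPre a p ∧ x ∈ fruit V p := by
  classical
  have hext : ∀ c : List ℕ, x ∈ V c → ∃ k, x ∈ V (c ++ [k]) := by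
    intro c hc
    rw [hpart.1.2 c] at hc
    exact Set.mem_iUnion.mp hc
  let e : List ℕ → ℕ := fun c => if h : x ∈ V c then (hext c h).choose else 0
  have he : ∀ c, x ∈ V c → x ∈ V (c ++ [e c]) := by
    intro c hc
    simp only [e, dif_pos hc]
    exact (hext c hc).choose_spec
  let step : ℕ → List ℕ → List ℕ :=
    fun n c => c ++ [if h : n < a.length then a.get ⟨n, h⟩ else e c]
  let c : ℕ → List ℕ := fun n => Nat.rec [] step n
  have hcs : ∀ n, c (n+1) = c n ++ [if h : n < a.length then a.get ⟨n, h⟩ else e (c n)] :=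
    fun n => rfl
  have htake : ∀ n, n ≤ a.length → c n = a.take n := by
    intro n
    induction n with
    | zero => intro _; rfl
    | succ k ih =>
      intro hk
      have hk' : k < a.length := hk
      rw [hcs k, ih (Nat.le_of_lt hk'), dif_pos hk']
      rw [← List.concat_eq_append]
      exact List.take_concat_get hk'
  have hmem : ∀ n, x ∈ V (c n) := by
    intro n
    induction n with
    | zero =>
      have : c 0 = [] := rfl
      rw [this, hpart.1.1]
      trivial
    | succ k ih =>
      by_cases hk : k < a.length
      · rw [htake (k+1) hk]
        exact mono_of_covers' hpart.1 (List.take_prefix _ _) hx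
      · rw [hcs k, dif_neg hk]
        exact he (c k) ih
  let p : ℕ → ℕ := fun n => if h : n < a.length then a.get ⟨n, h⟩ else e (c n)
  have hpre : ∀ n, pre p n = c n := by
    intro n
    induction n with
    | zero => simp [pre]; rfl
    | succ k ih => rw [pre_succ', ih, hcs k]
  refine ⟨p, ?_, ?_⟩
  · show a = pre p a.length
    rw [hpre, htake a.length le_rfl, List.take_length]
  · exact Set.mem_iInter.mpr fun n => (hpre n) ▸ hmem n

end aux

/-- Every Lusin π-base for a space `(X,τ)` is an α-scheme for `(X,τ)`. -/
theorem statement15 {X : Type*} [tX : TopologicalSpace X] (V : List ℕ → Set X)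
    (hV : LusinPiBase tX V) :
    AlphaScheme tX V := by

  obtain ⟨hopen, hpart, hstrict, hL6⟩ := hV
  refine ⟨hopen, ?_, hpart.1, ?_, ?_⟩
  · intro q
    obtain ⟨x, hxq⟩ := hstrict q
    exact ⟨x, by rw [hxq]; exact rfl⟩
  · intro a x hx
    obtain ⟨p, hp1, hp2⟩ := exists_branch' hpart a x hx
    exact ⟨p, hp1, hp2, arrowPt_of_fruit' ⟨hopen, hpart, hstrict, hL6⟩ hp2⟩
  · intro p
    obtain ⟨x, hxp⟩ := hstrict p
    have hxf : x ∈ fruit V p := by rw [hxp]; exact rfl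
    exact ⟨x, hxf, arrowPt_of_fruit' ⟨hopen, hpart, hstrict, hL6⟩ hxf⟩
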